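/- Let 𝕍_m ⊛ (·) be the linear map built from orthonormal tensors 𝒱₁,…,𝒱_{m+1} generated by the T-global Arnoldi process with initial residual ℛ₀, and let H̃_m be the (m+1)×m Hessenberg matrix. For 𝒳 = 𝒳₀ + 𝕍_m ⊛ y, the residual satisfies ‖𝒞 − 𝒜 ⋆ 𝒳‖_F = ‖ ‖ℛ₀‖_F e₁ − H̃_m y ‖₂, where e₁ ∈ ℝ^{m+1} is the first canonical basis vector. -/
import Mathlib

open Matrix

/-- The T-product of two third-order tensors. -/
def tprod3 {n₁ n₂ m n₃ : ℕ} (A : Fin n₁ → Fin n₂ → Fin n₃ → ℝ)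
    (B : Fin n₂ → Fin m → Fin n₃ → ℝ) : Fin n₁ → Fin m → Fin n₃ → ℝ :=
  fun i j k => ∑ t : Fin n₃, ∑ l : Fin n₂, A i l (k - t) * B l j t

/-- The entrywise inner product of two third-order tensors. -/
def tinner {n₁ n₂ n₃ : ℕ} (A B : Fin n₁ → Fin n₂ → Fin n₃ → ℝ) : ℝ :=
  ∑ i : Fin n₁, ∑ j : Fin n₂, ∑ k : Fin n₃, A i j k * B i j k

/-- The Frobenius norm of a third-order tensor. -/
noncomputable def tnorm {n₁ n₂ n₃ : ℕ} (A : Fin n₁ → Fin n₂ → Fin n₃ → ℝ) : ℝ :=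
  Real.sqrt (tinner A A)

lemma tprod3_add {n₁ n₂ m n₃ : ℕ} (A : Fin n₁ → Fin n₂ → Fin n₃ → ℝ)
    (B B' : Fin n₂ → Fin m → Fin n₃ → ℝ) :
    tprod3 A (B + B') = tprod3 A B + tprod3 A B' := by
  funext i j k
  simp [tprod3, mul_add, Finset.sum_add_distrib]

lemma tprod3_sum {n₁ n₂ m n₃ q : ℕ} (A : Fin n₁ → Fin n₂ → Fin n₃ → ℝ)
    (f : Fin q → Fin n₂ → Fin m → Fin n₃ → ℝ) (S : Finset (Fin q)) :
    tprod3 A (∑ x ∈ S, f x) = ∑ x ∈ S, tprod3 A (f x) := by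
  induction S using Finset.cons_induction with
  | empty => funext i j k; simp [tprod3]
  | cons a s ha ih => rw [Finset.sum_cons, tprod3_add, ih, Finset.sum_cons]

lemma tprod3_smul {n₁ n₂ m n₃ : ℕ} (A : Fin n₁ → Fin n₂ → Fin n₃ → ℝ)
    (c : ℝ) (B : Fin n₂ → Fin m → Fin n₃ → ℝ) :
    tprod3 A (c • B) = c • tprod3 A B := by
  funext i j k
  simp [tprod3, Finset.mul_sum, mul_left_comm]

lemma tinner_add_left {n₁ n₂ n₃ : ℕ} (X Y B : Fin n₁ → Fin n₂ → Fin n₃ → ℝ) :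
    tinner (X + Y) B = tinner X B + tinner Y B := by
  simp [tinner, add_mul, Finset.sum_add_distrib]

lemma tinner_smul_left {n₁ n₂ n₃ : ℕ} (c : ℝ) (X B : Fin n₁ → Fin n₂ → Fin n₃ → ℝ) :
    tinner (c • X) B = c * tinner X B := by
  simp [tinner, Finset.mul_sum, mul_assoc]

lemma tinner_comm {n₁ n₂ n₃ : ℕ} (X B : Fin n₁ → Fin n₂ → Fin n₃ → ℝ) :
    tinner X B = tinner B X := by
  simp [tinner, mul_comm]

lemma tinner_sum_left {n₁ n₂ n₃ q : ℕ} (f : Fin q → Fin n₁ → Fin n₂ → Fin n₃ → ℝ)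
    (B : Fin n₁ → Fin n₂ → Fin n₃ → ℝ) (S : Finset (Fin q)) :
    tinner (∑ x ∈ S, f x) B = ∑ x ∈ S, tinner (f x) B := by
  induction S using Finset.cons_induction with
  | empty => simp [tinner]
  | cons a s ha ih => rw [Finset.sum_cons, tinner_add_left, ih, Finset.sum_cons]

lemma tinner_sum_smul {n₁ n₂ n₃ q : ℕ} (z w : Fin q → ℝ)
    (V : Fin q → Fin n₁ → Fin n₂ → Fin n₃ → ℝ) :
    tinner (∑ i, z i • V i) (∑ i, w i • V i)
      = ∑ i, ∑ j, z i * w j * tinner (V i) (V j) := by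
  rw [tinner_sum_left]
  refine Finset.sum_congr rfl fun i _ => ?_
  rw [tinner_smul_left, tinner_comm, tinner_sum_left, Finset.mul_sum]
  refine Finset.sum_congr rfl fun j _ => ?_
  rw [tinner_smul_left, tinner_comm]
  ring

/-- For 𝒳 = 𝒳₀ + 𝕍_m ⊛ y, the GMRES residual satisfies
‖𝒞 − 𝒜⋆𝒳‖_F = ‖ ‖ℛ₀‖_F e₁ − H̃_m y ‖₂. -/
theorem tglobal_gmres_residual_norm {n s p m : ℕ}
    (A : Fin n → Fin n → Fin p → ℝ)
    (C X₀ : Fin n → Fin s → Fin p → ℝ)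
    (V : Fin (m + 1) → Fin n → Fin s → Fin p → ℝ)
    (H : Matrix (Fin (m + 1)) (Fin m) ℝ)
    (horth : ∀ i j : Fin (m + 1), tinner (V i) (V j) = if i = j then 1 else 0)
    (harnoldi : ∀ j : Fin m,
      tprod3 A (V j.castSucc) = ∑ i : Fin (m + 1), H i j • V i)
    (hR0 : C - tprod3 A X₀ = tnorm (C - tprod3 A X₀) • V 0)
    (y : Fin m → ℝ) :
    tnorm (C - tprod3 A (X₀ + ∑ j : Fin m, y j • V j.castSucc)) =
      Real.sqrt (∑ i : Fin (m + 1),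
        (tnorm (C - tprod3 A X₀) * (if i = 0 then 1 else 0) - (H *ᵥ y) i) ^ 2) := by
  set β := tnorm (C - tprod3 A X₀) with hβ
  set z : Fin (m + 1) → ℝ := fun i => β * (if i = 0 then 1 else 0) - (H *ᵥ y) i with hz
  have hres : C - tprod3 A (X₀ + ∑ j : Fin m, y j • V j.castSucc)
      = ∑ i : Fin (m + 1), z i • V i := by
    rw [tprod3_add, tprod3_sum]
    have h1 : ∀ j : Fin m, tprod3 A (y j • V j.castSucc)
        = ∑ i : Fin (m + 1), (H i j * y j) • V i := by
      intro j
      rw [tprod3_smul, harnoldi j, Finset.smul_sum]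
      refine Finset.sum_congr rfl fun i _ => ?_
      rw [smul_smul, mul_comm]
    have h2 : (∑ j : Fin m, tprod3 A (y j • V j.castSucc))
        = ∑ i : Fin (m + 1), (H *ᵥ y) i • V i := by
      simp_rw [h1]
      rw [Finset.sum_comm]
      refine Finset.sum_congr rfl fun i _ => ?_
      rw [← Finset.sum_smul]
      rfl
    have h3 : (β • V 0) = ∑ i : Fin (m + 1), (β * (if i = 0 then 1 else 0)) • V i := by
      rw [Finset.sum_eq_single 0]
      · simp
      · intro b _ hb; simp [hb]
      · simp
    have : C - (tprod3 A X₀ + ∑ j : Fin m, tprod3 A (y j • V j.castSucc))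
        = (C - tprod3 A X₀) - ∑ j : Fin m, tprod3 A (y j • V j.castSucc) := by
      abel
    rw [this, hR0, h2, h3, ← Finset.sum_sub_distrib]
    refine Finset.sum_congr rfl fun i _ => ?_
    rw [← sub_smul]
  rw [hres, tnorm, tinner_sum_smul]
  congr 1
  refine Finset.sum_congr rfl fun i _ => ?_
  rw [Finset.sum_eq_single i]
  · rw [horth, if_pos rfl, mul_one, ← sq]
  · intro b _ hb; rw [horth, if_neg (Ne.symm hb), mul_zero]
  · simp
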